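/- Let P ∈ Ψ(R) with P₊ = 1, and suppose that ( P · h²∂² · P⁻¹ )₋ = 0. Then P · h²∂² · P⁻¹ = h²∂² + 2u for some u ∈ R; in particular the coefficient of ∂¹ in P · h²∂² · P⁻¹ vanishes, its coefficient of ∂² is h², and it contains no powers ∂ⁿ with n ≥ 3. -/
import Mathlib


open scoped BigOperators

/-- Generalized binomial coefficient `C(k,l) = k(k-1)⋯(k-l+1)/l!` for `k : ℤ`. -/
def gbinom (k : ℤ) (l : ℕ) : ℚ :=
  (∏ i ∈ Finset.range l, ((k : ℚ) - i)) / (Nat.factorial l)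

/-- Pseudo-differential operators (and symbols): coefficient functions `ℤ → R`
with support bounded above.  The parameter `d` (the derivation) determines the product. -/
structure PDO (R : Type) [CommRing R] [Algebra ℚ R] (d : R →+ R) where
  coeff : ℤ → R
  bdd : ∃ N : ℤ, ∀ n : ℤ, N < n → coeff n = 0

namespace PDO

variable {R : Type} [CommRing R] [Algebra ℚ R] {d : R →+ R}

theorem ext' {A B : PDO R d} (h : A.coeff = B.coeff) : A = B := by
  cases A; cases B; cases h; rfl

set_option linter.unusedSectionVars false in
theorem iterD_zero (d : R →+ R) (j : ℕ) : d^[j] (0 : R) = 0 := by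
  induction j with
  | zero => rfl
  | succ j ih => rw [Function.iterate_succ_apply', ih, map_zero]

instance : Zero (PDO R d) := ⟨⟨fun _ => 0, ⟨0, fun _ _ => rfl⟩⟩⟩

instance : One (PDO R d) :=
  ⟨⟨fun n => if n = 0 then 1 else 0, ⟨0, fun n hn => if_neg (by omega)⟩⟩⟩

instance : Add (PDO R d) :=
  ⟨fun A B => ⟨fun n => A.coeff n + B.coeff n, by
    obtain ⟨N, hN⟩ := A.bdd
    obtain ⟨M, hM⟩ := B.bdd
    exact ⟨max N M, fun n hn => by
      show A.coeff n + B.coeff n = 0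
      rw [hN n (lt_of_le_of_lt (le_max_left N M) hn),
        hM n (lt_of_le_of_lt (le_max_right N M) hn), add_zero]⟩⟩⟩

instance : Neg (PDO R d) :=
  ⟨fun A => ⟨fun n => -A.coeff n, by
    obtain ⟨N, hN⟩ := A.bdd
    exact ⟨N, fun n hn => by show -A.coeff n = 0; rw [hN n hn, neg_zero]⟩⟩⟩

instance : SMul ℚ (PDO R d) :=
  ⟨fun c A => ⟨fun n => c • A.coeff n, by
    obtain ⟨N, hN⟩ := A.bdd
    exact ⟨N, fun n hn => by show c • A.coeff n = 0; rw [hN n hn, smul_zero]⟩⟩⟩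

instance : AddCommGroup (PDO R d) where
  add := (· + ·)
  zero := 0
  neg := Neg.neg
  add_assoc A B C := ext' (funext fun n => add_assoc (A.coeff n) (B.coeff n) (C.coeff n))
  zero_add A := ext' (funext fun n => zero_add (A.coeff n))
  add_zero A := ext' (funext fun n => add_zero (A.coeff n))
  add_comm A B := ext' (funext fun n => add_comm (A.coeff n) (B.coeff n))
  neg_add_cancel A := ext' (funext fun n => neg_add_cancel (A.coeff n))
  nsmul := nsmulRec
  zsmul := zsmulRec

/-- The product of pseudo-differential operators, determined by the commutation rule
`∂^k · f = Σ_{l ≥ 0} C(k,l) (∂^l f) ∂^(k-l)`. -/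
noncomputable instance : Mul (PDO R d) :=
  ⟨fun A B =>
    ⟨fun n => ∑ᶠ (k : ℤ) (m : ℤ),
        if _ : 0 ≤ k + m - n then
          A.coeff k * (gbinom k (k + m - n).toNat • (d^[(k + m - n).toNat] (B.coeff m)))
        else 0, by
      obtain ⟨N, hN⟩ := A.bdd
      obtain ⟨M, hM⟩ := B.bdd
      refine ⟨N + M, fun n hn => ?_⟩
      have hz : ∀ k m : ℤ,
          (if _ : 0 ≤ k + m - n then
            A.coeff k * (gbinom k (k + m - n).toNat • (d^[(k + m - n).toNat] (B.coeff m)))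
          else 0) = 0 := by
        intro k m
        by_cases hl : 0 ≤ k + m - n
        · rw [dif_pos hl]
          by_cases hk : N < k
          · rw [hN k hk, zero_mul]
          · rw [hM m (by omega), iterD_zero, smul_zero, mul_zero]
        · rw [dif_neg hl]
      simp only [hz, finsum_zero]⟩⟩

noncomputable def npow (A : PDO R d) : ℕ → PDO R d
  | 0 => 1
  | n + 1 => npow A n * A

noncomputable instance : Pow (PDO R d) ℕ := ⟨fun A n => A.npow n⟩

/-- The monomial `r ∂^k`. -/
def mono (r : R) (k : ℤ) : PDO R d :=
  ⟨fun n => if n = k then r else 0, ⟨k, fun n hn => if_neg (by omega)⟩⟩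

/-- The constant (order-zero) operator `r`. -/
def const (r : R) : PDO R d := mono r 0

/-- The operator `∂`. -/
def del : PDO R d := mono (1 : R) 1

/-- The operator `h∂`. -/
def hdel (h : Rˣ) : PDO R d := mono (h : R) 1

/-- The Lax operator `L = h²∂² + 2u`. -/
def Lop (h : Rˣ) (u : R) : PDO R d :=
  ⟨fun n => if n = 2 then (h : R) ^ 2 else if n = 0 then 2 * u else 0,
   ⟨2, fun n hn => by
      show (if n = 2 then (h : R) ^ 2 else if n = 0 then 2 * u else 0) = 0
      rw [if_neg (by omega), if_neg (by omega)]⟩⟩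

/-- The differential part `A₊`. -/
def pos (A : PDO R d) : PDO R d :=
  ⟨fun n => if 0 ≤ n then A.coeff n else 0, by
    obtain ⟨N, hN⟩ := A.bdd
    refine ⟨N, fun n hn => ?_⟩
    show (if 0 ≤ n then A.coeff n else 0) = 0
    by_cases h0 : (0 : ℤ) ≤ n
    · rw [if_pos h0]; exact hN n hn
    · rw [if_neg h0]⟩

/-- The integral part `A₋ = A − A₊`. -/
def negp (A : PDO R d) : PDO R d :=
  ⟨fun n => if n < 0 then A.coeff n else 0, ⟨0, fun n hn => if_neg (by omega)⟩⟩

/-- The residue `Res_∂ A = a₋₁`. -/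
def res (A : PDO R d) : R := A.coeff (-1)

/-- The formal adjoint, determined by `(f ∂^k)* = (−∂)^k · f`. -/
noncomputable def adj (A : PDO R d) : PDO R d :=
  ⟨fun n => ∑ᶠ k : ℤ,
      if _ : 0 ≤ k - n then
        (((-1 : ℚ) ^ k) * gbinom k (k - n).toNat) • (d^[(k - n).toNat] (A.coeff k))
      else 0, by
    obtain ⟨N, hN⟩ := A.bdd
    refine ⟨N, fun n hn => ?_⟩
    have hz : ∀ k : ℤ, (if _ : 0 ≤ k - n then
        (((-1 : ℚ) ^ k) * gbinom k (k - n).toNat) • (d^[(k - n).toNat] (A.coeff k))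
      else 0) = 0 := by
      intro k
      by_cases hl : 0 ≤ k - n
      · rw [dif_pos hl, hN k (by omega), iterD_zero, smul_zero]
      · rw [dif_neg hl]
    simp only [hz, finsum_zero]⟩

/-- The operator `P(h∂) = Σ pₙ hⁿ ∂ⁿ` associated to the symbol `P(λ) = Σ pₙ λⁿ`. -/
noncomputable def ofSymbol (h : Rˣ) (A : PDO R d) : PDO R d :=
  ⟨fun n => A.coeff n * ((h ^ n : Rˣ) : R), by
    obtain ⟨N, hN⟩ := A.bdd
    exact ⟨N, fun n hn => by show A.coeff n * ((h ^ n : Rˣ) : R) = 0; rw [hN n hn, zero_mul]⟩⟩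

/-- Apply `d^[i]` to each coefficient. -/
def mapD (i : ℕ) (A : PDO R d) : PDO R d :=
  ⟨fun n => d^[i] (A.coeff n), by
    obtain ⟨N, hN⟩ := A.bdd
    exact ⟨N, fun n hn => by show d^[i] (A.coeff n) = 0; rw [hN n hn, iterD_zero]⟩⟩

/-- The coefficientwise extension of an additive map `D : R →+ R`. -/
def mapHom (D : R →+ R) (A : PDO R d) : PDO R d :=
  ⟨fun n => D (A.coeff n), by
    obtain ⟨N, hN⟩ := A.bdd
    exact ⟨N, fun n hn => by show D (A.coeff n) = 0; rw [hN n hn, map_zero]⟩⟩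

/-- The commutator `[A, B] = AB − BA`. -/
noncomputable def comm (A B : PDO R d) : PDO R d := A * B - B * A

end PDO

/-- The Leibniz rule: `d` is a derivation. -/
def Leibniz {R : Type} [CommRing R] [Algebra ℚ R] (d : R →+ R) : Prop :=
  ∀ a b : R, d (a * b) = a * d b + b * d a

/-- `aₙ = 1/(2n+1)!!`. -/
def kdvA (n : ℕ) : ℚ := 1 / (Nat.doubleFactorial (2 * n + 1))

/-- `bₙ = (2n−1)!!` (with `b₀ = (−1)!! = 1`). -/
def kdvB (n : ℕ) : ℚ := (Nat.doubleFactorial (2 * n - 1) : ℕ)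



section Helpers

variable {R : Type} [CommRing R] [Algebra ℚ R] {d : R →+ R}

lemma gbinom_zero (k : ℤ) : gbinom k 0 = 1 := by simp [gbinom]

lemma gbinom_one (k : ℤ) : gbinom k 1 = k := by simp [gbinom]

lemma PDO.mul_coeff (A B : PDO R d) (n : ℤ) :
    (A * B).coeff n = ∑ᶠ (k : ℤ) (m : ℤ),
      if _ : 0 ≤ k + m - n then
        A.coeff k * (gbinom k (k + m - n).toNat • (d^[(k + m - n).toNat] (B.coeff m)))
      else 0 := rfl

set_option linter.unusedSectionVars false in
lemma finsum2_eq_sum (t : ℤ → ℤ → R) (s s' : Finset ℤ)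
    (h : ∀ k m, t k m ≠ 0 → k ∈ s ∧ m ∈ s') :
    (∑ᶠ (k : ℤ) (m : ℤ), t k m) = ∑ k ∈ s, ∑ m ∈ s', t k m := by
  have hin : ∀ k, (∑ᶠ m, t k m) = ∑ m ∈ s', t k m := by
    intro k
    apply finsum_eq_finset_sum_of_support_subset
    intro m hm
    exact Finset.mem_coe.mpr (h k m hm).2
  have hout : (∑ᶠ (k : ℤ), ∑ᶠ m, t k m) = ∑ k ∈ s, ∑ᶠ m, t k m := by
    apply finsum_eq_finset_sum_of_support_subset
    intro k hk
    by_contra hks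
    refine hk ?_
    have hz : ∀ m, t k m = 0 := fun m => by
      by_contra hm
      exact hks (Finset.mem_coe.mpr (h k m hm).1)
    simp only [hz, finsum_zero]
  rw [hout]
  exact Finset.sum_congr rfl fun k _ => hin k

lemma PDO.negp_coeff (A : PDO R d) (n : ℤ) :
    (PDO.negp A).coeff n = if n < 0 then A.coeff n else 0 := rfl

end Helpers

/-- If `P₊ = 1` and `(P·h²∂²·P⁻¹)₋ = 0` then `P·h²∂²·P⁻¹ = h²∂² + 2u` for some `u ∈ R`. -/
theorem dressed_operator_is_Lax
    (R : Type) [CommRing R] [Algebra ℚ R] (d : R →+ R)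
    (hd : Leibniz d) (h : Rˣ) (hdh : d (h : R) = 0)
    (P Pinv : PDO R d) (hP : PDO.pos P = 1)
    (hPinv : P * Pinv = 1 ∧ Pinv * P = 1)
    (hcon : PDO.negp (P * PDO.Lop h 0 * Pinv) = 0) :
    ∃ u : R, P * PDO.Lop h 0 * Pinv = PDO.Lop h u := by
  classical
  have one_coeff : ∀ n : ℤ, (1 : PDO R d).coeff n = if n = 0 then 1 else 0 := fun _ => rfl
  have hd1 : d (1 : R) = 0 := by
    have h11 := hd 1 1
    rw [mul_one, one_mul] at h11
    exact (left_eq_add.mp h11)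
  have hdh2 : d ((h : R) ^ 2) = 0 := by
    have hhh := hd (h : R) (h : R)
    rw [hdh, mul_zero, add_zero] at hhh
    rw [pow_two, hhh]
  have hP0 : P.coeff 0 = 1 := by
    have h0 := congrFun (congrArg PDO.coeff hP) 0
    rw [show (PDO.pos P).coeff 0 = if (0:ℤ) ≤ 0 then P.coeff 0 else 0 from rfl,
      if_pos le_rfl, one_coeff, if_pos rfl] at h0
    exact h0
  have hPpos : ∀ k : ℤ, 0 < k → P.coeff k = 0 := by
    intro k hk
    have h0 := congrFun (congrArg PDO.coeff hP) k
    rw [show (PDO.pos P).coeff k = if (0:ℤ) ≤ k then P.coeff k else 0 from rfl,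
      if_pos (le_of_lt hk), one_coeff, if_neg (by omega)] at h0
    exact h0
  -- the key step: coefficients of Pinv from Pinv * P = 1
  have step : ∀ n : ℤ, 0 ≤ n → (∀ m : ℤ, n < m → Pinv.coeff m = 0) →
      Pinv.coeff n = (1 : PDO R d).coeff n := by
    intro n hn hm
    have key : (Pinv * P).coeff n = Pinv.coeff n := by
      rw [PDO.mul_coeff]
      rw [finsum2_eq_sum _ {n} {0} ?memA]
      case memA =>
        intro k m hne
        by_cases hl : 0 ≤ k + m - n
        · by_cases hmp : 0 < m
          · exact absurd (by rw [dif_pos hl, hPpos m hmp, PDO.iterD_zero, smul_zero, mul_zero]) hne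
          · by_cases hkp : n < k
            · exact absurd (by rw [dif_pos hl, hm k hkp, zero_mul]) hne
            · exact ⟨Finset.mem_singleton.mpr (by omega), Finset.mem_singleton.mpr (by omega)⟩
        · exact absurd (dif_neg hl) hne
      rw [Finset.sum_singleton, Finset.sum_singleton,
        dif_pos (by omega : (0:ℤ) ≤ n + 0 - n)]
      simp [show n + 0 - n = 0 from by ring, gbinom_zero, hP0]
    rw [← key, hPinv.2]
  obtain ⟨N, hN⟩ := Pinv.bdd
  have hQtop : ∀ j : ℕ, ∀ n : ℤ, 0 < n → N < n + j → Pinv.coeff n = 0 := by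
    intro j
    induction j with
    | zero => intro n hn hNn; exact hN n (by omega)
    | succ j ih =>
      intro n hn hNn
      rw [step n (le_of_lt hn) (fun m hm => ih m (by omega) (by omega)), one_coeff]
      exact if_neg (by omega)
  have hQ : ∀ m : ℤ, 0 < m → Pinv.coeff m = 0 :=
    fun m hm => hQtop ((N - m).toNat + 1) m hm (by omega)
  have hQ0 : Pinv.coeff 0 = 1 := by
    rw [step 0 le_rfl (fun m hm => hQ m hm), one_coeff, if_pos rfl]
  -- P.coeff (-1) + Pinv.coeff (-1) = 0, from P * Pinv = 1
  have hpq : P.coeff (-1) + Pinv.coeff (-1) = 0 := by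
    have key : (P * Pinv).coeff (-1) = Pinv.coeff (-1) + P.coeff (-1) := by
      rw [PDO.mul_coeff]
      rw [finsum2_eq_sum _ {0, -1} {0, -1} ?memB]
      case memB =>
        intro k m hne
        by_cases hl : 0 ≤ k + m - (-1)
        · by_cases hmp : 0 < m
          · exact absurd (by rw [dif_pos hl, hQ m hmp, PDO.iterD_zero, smul_zero, mul_zero]) hne
          · by_cases hkp : 0 < k
            · exact absurd (by rw [dif_pos hl, hPpos k hkp, zero_mul]) hne
            · constructor <;>
                (simp only [Finset.mem_insert, Finset.mem_singleton]; omega)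
        · exact absurd (dif_neg hl) hne
      rw [Finset.sum_pair (by decide : (0:ℤ) ≠ -1),
        Finset.sum_pair (by decide : (0:ℤ) ≠ -1),
        Finset.sum_pair (by decide : (0:ℤ) ≠ -1)]
      norm_num [gbinom_zero, gbinom_one, hP0, hQ0, hd1]
    rw [hPinv.1, one_coeff, if_neg (by omega)] at key
    linear_combination -key
  -- coefficients of C = P * h²∂²
  have hL : ∀ m : ℤ, (PDO.Lop h 0 : PDO R d).coeff m = if m = 2 then (h:R)^2 else 0 := by
    intro m
    show (if m = 2 then (h:R)^2 else if m = 0 then 2 * 0 else 0) = _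
    by_cases hm2 : m = 2
    · rw [if_pos hm2, if_pos hm2]
    · rw [if_neg hm2, if_neg hm2]
      by_cases hm0 : m = 0
      · rw [if_pos hm0, mul_zero]
      · rw [if_neg hm0]
  have hdl : ∀ l : ℕ, 0 < l → d^[l] ((h:R)^2) = 0 := by
    intro l hl
    obtain ⟨j, rfl⟩ : ∃ j, l = j + 1 := ⟨l - 1, by omega⟩
    rw [Function.iterate_succ_apply, hdh2, PDO.iterD_zero]
  have hC : ∀ n : ℤ, (P * PDO.Lop h 0).coeff n = P.coeff (n - 2) * (h:R)^2 := by
    intro n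
    rw [PDO.mul_coeff, finsum2_eq_sum _ {n-2} {2} ?memC]
    case memC =>
      intro k m hne
      by_cases hl : 0 ≤ k + m - n
      · by_cases hm2 : m = 2
        · by_cases hl0 : k + m - n = 0
          · exact ⟨Finset.mem_singleton.mpr (by omega), Finset.mem_singleton.mpr hm2⟩
          · exact absurd (by
              rw [dif_pos hl, hm2, hL, if_pos rfl, hdl _ (by omega), smul_zero, mul_zero]) hne
        · exact absurd (by
            rw [dif_pos hl, hL, if_neg hm2, PDO.iterD_zero, smul_zero, mul_zero]) hne
      · exact absurd (dif_neg hl) hne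
    rw [Finset.sum_singleton, Finset.sum_singleton,
      dif_pos (by omega : (0:ℤ) ≤ (n-2) + 2 - n)]
    simp [show (n-2) + 2 - n = 0 from by ring, gbinom_zero, hL]
  have hCpos : ∀ k : ℤ, 2 < k → (P * PDO.Lop h 0).coeff k = 0 := by
    intro k hk
    rw [hC, hPpos _ (by omega), zero_mul]
  -- coefficients of A = (P * h²∂²) * Pinv
  have hA3 : ∀ n : ℤ, 3 ≤ n → (P * PDO.Lop h 0 * Pinv).coeff n = 0 := by
    intro n hn
    rw [PDO.mul_coeff, finsum2_eq_sum _ ∅ ∅ ?memD]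
    case memD =>
      intro k m hne
      exfalso
      by_cases hl : 0 ≤ k + m - n
      · by_cases hmp : 0 < m
        · exact hne (by rw [dif_pos hl, hQ m hmp, PDO.iterD_zero, smul_zero, mul_zero])
        · exact hne (by rw [dif_pos hl, hCpos k (by omega), zero_mul])
      · exact hne (dif_neg hl)
    simp
  have hA2 : (P * PDO.Lop h 0 * Pinv).coeff 2 = (h:R)^2 := by
    rw [PDO.mul_coeff, finsum2_eq_sum _ {2} {0} ?memE]
    case memE =>
      intro k m hne
      by_cases hl : 0 ≤ k + m - 2
      · by_cases hmp : 0 < m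
        · exact absurd (by rw [dif_pos hl, hQ m hmp, PDO.iterD_zero, smul_zero, mul_zero]) hne
        · by_cases hkp : 2 < k
          · exact absurd (by rw [dif_pos hl, hCpos k hkp, zero_mul]) hne
          · exact ⟨Finset.mem_singleton.mpr (by omega), Finset.mem_singleton.mpr (by omega)⟩
      · exact absurd (dif_neg hl) hne
    rw [Finset.sum_singleton, Finset.sum_singleton, dif_pos (by norm_num)]
    norm_num [gbinom_zero, hC, hP0, hQ0]
  have hA1 : (P * PDO.Lop h 0 * Pinv).coeff 1 = 0 := by
    rw [PDO.mul_coeff, finsum2_eq_sum _ {1, 2} {0, -1} ?memF]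
    case memF =>
      intro k m hne
      by_cases hl : 0 ≤ k + m - 1
      · by_cases hmp : 0 < m
        · exact absurd (by rw [dif_pos hl, hQ m hmp, PDO.iterD_zero, smul_zero, mul_zero]) hne
        · by_cases hkp : 2 < k
          · exact absurd (by rw [dif_pos hl, hCpos k hkp, zero_mul]) hne
          · constructor <;>
              (simp only [Finset.mem_insert, Finset.mem_singleton]; omega)
      · exact absurd (dif_neg hl) hne
    rw [Finset.sum_pair (by decide : (1:ℤ) ≠ 2),
      Finset.sum_pair (by decide : (0:ℤ) ≠ -1),
      Finset.sum_pair (by decide : (0:ℤ) ≠ -1)]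
    norm_num [gbinom_zero, gbinom_one, hC, hP0, hQ0, hd1]
    linear_combination ((h:R))^2 * hpq
  have hAneg : ∀ n : ℤ, n < 0 → (P * PDO.Lop h 0 * Pinv).coeff n = 0 := by
    intro n hn
    have hcn := congrFun (congrArg PDO.coeff hcon) n
    rw [PDO.negp_coeff, if_pos hn] at hcn
    exact hcn
  refine ⟨(1/2 : ℚ) • (P * PDO.Lop h 0 * Pinv).coeff 0, ?_⟩
  apply PDO.ext'
  funext n
  show (P * PDO.Lop h 0 * Pinv).coeff n
    = if n = 2 then (h:R)^2 else if n = 0 then 2 * ((1/2 : ℚ) • (P * PDO.Lop h 0 * Pinv).coeff 0) else 0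
  by_cases h2 : n = 2
  · rw [if_pos h2, h2, hA2]
  · rw [if_neg h2]
    by_cases h0 : n = 0
    · rw [if_pos h0, h0]
      rw [mul_smul_comm, two_mul, ← two_smul ℚ, smul_smul]
      norm_num
    · rw [if_neg h0]
      rcases lt_trichotomy n 0 with hl | hl | hl
      · exact hAneg n hl
      · exact absurd hl h0
      · by_cases h1 : n = 1
        · rw [h1]; exact hA1
        · exact hA3 n (by omega)
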